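/- arXiv:1905.10775 — 4 statements merged into one kernel-verified Lean document; each statement's English description precedes it below -/
import Mathlib

section
/- Let G be a finite connected graph and S a dominating set of G. Define the graph G_S on vertex set S where two distinct vertices u, v ∈ S are adjacent if and only if their distance in G is at most 3. Then G_S is connected. -/
/-- The graph `G_S` on a dominating set `S`: two distinct vertices of `S`
are adjacent iff their distance in `G` is positive (they are reachable from
each other) and at most `3`. -/
def domGraph {V : Type*} (G : SimpleGraph V) (S : Set V) : SimpleGraph S where
  Adj u v := u ≠ v ∧ G.Reachable u.1 v.1 ∧ G.dist u.1 v.1 ≤ 3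
  symm := ⟨fun u v h => ⟨h.1.symm, h.2.1.symm, by rw [SimpleGraph.dist_comm]; exact h.2.2⟩⟩
  loopless := ⟨fun u h => h.1 rfl⟩

private lemma domStep {V : Type*} {G : SimpleGraph V} (hconn : G.Connected)
    {S : Set V} {s v : V} (hs : s ∈ S) (hv : v ∈ S) (h : G.dist s v ≤ 3) :
    (domGraph G S).Reachable ⟨s, hs⟩ ⟨v, hv⟩ := by
  by_cases h' : s = v
  · subst h'; exact SimpleGraph.Reachable.refl _
  · exact SimpleGraph.Adj.reachable ⟨by simpa [Subtype.ext_iff] using h', hconn s v, h⟩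

private lemma domReach {V : Type*} (G : SimpleGraph V) (hconn : G.Connected)
    (S : Set V) (hdom : ∀ v : V, v ∈ S ∨ ∃ u ∈ S, G.Adj u v) :
    ∀ {w v : V} (_ : G.Walk w v) (hv : v ∈ S) (s : V) (hs : s ∈ S),
      G.dist s w ≤ 1 → (domGraph G S).Reachable ⟨s, hs⟩ ⟨v, hv⟩ := by
  intro w v q
  induction q with
  | nil =>
    intro hv s hs hd
    exact domStep hconn hs hv (by omega)
  | @cons a b c hab q ih =>
    intro hv s hs hd
    have h3 : G.dist a b ≤ 1 := by simpa using SimpleGraph.dist_le (hab.toWalk)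
    rcases hdom b with hb | ⟨t, ht, htb⟩
    · refine SimpleGraph.Reachable.trans ?_ (ih hv b hb (by simp [SimpleGraph.dist_self]))
      refine domStep hconn hs hb ?_
      have h1 := hconn.dist_triangle (u := s) (v := a) (w := b)
      omega
    · have h4 : G.dist b t ≤ 1 := by simpa using SimpleGraph.dist_le (htb.symm.toWalk)
      refine SimpleGraph.Reachable.trans ?_
        (ih hv t ht (by rw [SimpleGraph.dist_comm]; omega))
      refine domStep hconn hs ht ?_
      have h1 := hconn.dist_triangle (u := s) (v := a) (w := t)
      have h2 := hconn.dist_triangle (u := a) (v := b) (w := t)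
      omega

/-- If `G` is a finite connected graph and `S` a dominating set,
then the graph `G_S` (vertices of `S`, edges between vertices at
`G`-distance at most 3) is connected. -/
theorem stmt2 {V : Type*} [Fintype V] (G : SimpleGraph V) (hconn : G.Connected)
    (S : Set V) (hdom : ∀ v : V, v ∈ S ∨ ∃ u ∈ S, G.Adj u v) :
    (domGraph G S).Connected := by
  have hne : Nonempty S := by
    obtain ⟨v⟩ := hconn.nonempty
    rcases hdom v with hv | ⟨u, hu, _⟩
    · exact ⟨⟨v, hv⟩⟩
    · exact ⟨⟨u, hu⟩⟩
  rw [SimpleGraph.connected_iff]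
  refine ⟨fun u v => ?_, hne⟩
  obtain ⟨p⟩ := hconn u.1 v.1
  have := domReach G hconn S hdom p v.2 u.1 u.2 (by simp [SimpleGraph.dist_self])
  simpa using this
end

section
/- Let G be a finite connected graph and S a nonempty dominating set. Then there exists a connected dominating set S' ⊇ S of G with |S'| ≤ 3|S| - 2. (One can connect the nodes of S by at most |S|-1 paths each of length at most 3, adding at most 2 internal vertices per path.) -/
open SimpleGraph Finset

private lemma induce_singleton_connected {V : Type*} (G : SimpleGraph V) (a : V) :
    (G.induce ({a} : Set V)).Connected := by
  rw [connected_iff_exists_forall_reachable]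
  refine ⟨⟨a, rfl⟩, ?_⟩
  rintro ⟨b, hb⟩
  cases hb
  rfl

private lemma stmt4_aux {V : Type*} [Fintype V] [DecidableEq V] (G : SimpleGraph V)
    (hconn : G.Connected) :
    ∀ n : ℕ, ∀ P : Finset (Finset V), P.card ≤ n → P.Nonempty →
      (∀ A ∈ P, (G.induce (A : Set V)).Connected) →
      (∀ v : V, v ∈ P.sup id ∨ ∃ u ∈ P.sup id, G.Adj u v) →
      ∃ S' : Finset V, P.sup id ⊆ S' ∧ (G.induce (S' : Set V)).Connected ∧
        S'.card + 2 ≤ (∑ A ∈ P, A.card) + 2 * P.card := by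
  classical
  intro n
  induction n with
  | zero =>
    intro P hcard hne _ _
    exact absurd (Finset.card_pos.mpr hne) (by omega)
  | succ n ih =>
    intro P hcard hne hPconn hPdom
    rcases le_or_gt P.card 1 with h1 | h2
    · -- single piece
      have : P.card = 1 := le_antisymm h1 (Finset.card_pos.mpr hne)
      obtain ⟨A, rfl⟩ := Finset.card_eq_one.mp this
      refine ⟨A, ?_, ?_, ?_⟩
      · intro x hx
        rw [Finset.mem_sup] at hx
        obtain ⟨B, hB, hxB⟩ := hx
        rw [Finset.mem_singleton] at hB
        subst hB; exact hxB
      · exact hPconn A (Finset.mem_singleton_self A)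
      · simp
    · -- at least two pieces: find a short connecting walk
      obtain ⟨A₀, hA₀, B₀, hB₀, hAB₀⟩ := Finset.one_lt_card.mp h2
      obtain ⟨u₀, hu₀⟩ : A₀.Nonempty := by
        obtain ⟨⟨x, hx⟩⟩ := (hPconn A₀ hA₀).nonempty
        exact ⟨x, hx⟩
      obtain ⟨v₀, hv₀⟩ : B₀.Nonempty := by
        obtain ⟨⟨x, hx⟩⟩ := (hPconn B₀ hB₀).nonempty
        exact ⟨x, hx⟩
      set Pred : ℕ → Prop := fun m =>
        ∃ (A B : Finset V) (u v : V) (p : G.Walk u v),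
          A ∈ P ∧ B ∈ P ∧ A ≠ B ∧ u ∈ A ∧ v ∈ B ∧ p.length = m with hPred
      have hex : ∃ m, Pred m := by
        obtain ⟨p⟩ := hconn.preconnected u₀ v₀
        exact ⟨p.length, A₀, B₀, u₀, v₀, p, hA₀, hB₀, hAB₀, hu₀, hv₀, rfl⟩
      set d := Nat.find hex with hd
      have hdspec : Pred d := Nat.find_spec hex
      have hdmin : ∀ m, m < d → ¬ Pred m := fun m hm => Nat.find_min hex hm
      obtain ⟨A, B, u, v, p, hA, hB, hABne, hu, hv, hplen⟩ := hdspec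
      -- d ≤ 3
      have hd3 : d ≤ 3 := by
        by_contra hd4
        push_neg at hd4
        -- p has length ≥ 4, split off the first two edges
        cases p with
        | nil => simp at hplen; omega
        | @cons _ y _ h₁ p₁ =>
          cases p₁ with
          | nil => simp at hplen; omega
          | @cons _ x _ h₂ q =>
            have hqlen : q.length + 2 = d := by
              simpa [SimpleGraph.Walk.length_cons] using hplen
            -- x is dominated by the union
            have hxdom := hPdom x
            have : ∃ w, w ∈ P.sup id ∧ ∃ r : G.Walk w x, r.length ≤ 1 := by
              rcases hxdom with hx | ⟨w, hw, hadj⟩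
              · exact ⟨x, hx, SimpleGraph.Walk.nil, by simp⟩
              · exact ⟨w, hw, SimpleGraph.Walk.cons hadj SimpleGraph.Walk.nil, by simp⟩
            obtain ⟨w, hwU, r, hrlen⟩ := this
            rw [Finset.mem_sup] at hwU
            obtain ⟨C, hC, hwC⟩ := hwU
            by_cases hCA : C = A
            · subst hCA
              -- walk from w to v of length ≤ 1 + (d-2) < d
              have hwalk : (r.append q).length < d := by
                rw [SimpleGraph.Walk.length_append]; omega
              exact hdmin _ hwalk ⟨C, B, w, v, r.append q, hC, hB, hABne, hwC, hv, rfl⟩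
            · -- walk from u to w of length ≤ 2 + 1 < d
              have hwalk : ((SimpleGraph.Walk.cons h₁ (SimpleGraph.Walk.cons h₂
                  SimpleGraph.Walk.nil)).append r.reverse).length < d := by
                simp [SimpleGraph.Walk.length_append]; omega
              exact hdmin _ hwalk ⟨A, C, u, w, _, hA, hC, fun h => hCA h.symm, hu, hwC, rfl⟩
      -- merge A and B through p
      set M : Finset V := (A ∪ p.support.toFinset) ∪ B with hM
      have hMconn : (G.induce (M : Set V)).Connected := by
        have hsupp : (G.induce {x | x ∈ p.support}).Connected :=
          p.connected_induce_support
        have step1 : (G.induce ((A : Set V) ∪ {x | x ∈ p.support})).Connected :=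
          induce_union_connected (hPconn A hA).preconnected hsupp.preconnected ⟨u, hu, p.start_mem_support⟩
        have step2 : (G.induce (((A : Set V) ∪ {x | x ∈ p.support}) ∪ (B : Set V))).Connected :=
          induce_union_connected step1.preconnected (hPconn B hB).preconnected ⟨v, Or.inr p.end_mem_support, hv⟩
        have hcoe : (M : Set V) = ((A : Set V) ∪ {x | x ∈ p.support}) ∪ (B : Set V) := by
          simp [hM, Finset.coe_union, List.coe_toFinset, Set.union_assoc]
        rw [hcoe]
        exact step2
      -- card bound for M
      have hMcard : M.card ≤ A.card + B.card + 2 := by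
        have hsub : M ⊆ (A ∪ B) ∪ (p.support.toFinset \ {u, v}) := by
          intro x hx
          simp only [hM, Finset.mem_union, Finset.mem_sdiff, Finset.mem_insert,
            Finset.mem_singleton, List.mem_toFinset] at hx ⊢
          rcases hx with (hx | hx) | hx
          · tauto
          · by_cases hxu : x = u
            · subst hxu; tauto
            · by_cases hxv : x = v
              · subst hxv; tauto
              · tauto
          · tauto
        have hsupcard : p.support.toFinset.card ≤ d + 1 := by
          calc p.support.toFinset.card ≤ p.support.length := List.toFinset_card_le _
            _ = d + 1 := by rw [SimpleGraph.Walk.length_support, hplen]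
        have hdiffcard : (p.support.toFinset \ {u, v}).card ≤ 2 := by
          rcases le_or_gt d 1 with hdle | hdge
          · calc (p.support.toFinset \ {u, v}).card ≤ p.support.toFinset.card :=
                Finset.card_le_card (Finset.sdiff_subset)
              _ ≤ 2 := by omega
          · -- d ≥ 2, so u ≠ v (else Pred 0 would hold)
            have huv : u ≠ v := by
              intro h
              subst h
              exact hdmin 0 (by omega) ⟨A, B, u, u, SimpleGraph.Walk.nil, hA, hB, hABne,
                hu, hv, rfl⟩
            have huvsub : ({u, v} : Finset V) ⊆ p.support.toFinset := by
              intro x hx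
              simp only [Finset.mem_insert, Finset.mem_singleton] at hx
              rcases hx with rfl | rfl
              · simpa using p.start_mem_support
              · simpa using p.end_mem_support
            rw [Finset.card_sdiff_of_subset huvsub]
            have : ({u, v} : Finset V).card = 2 := Finset.card_pair huv
            omega
        calc M.card ≤ ((A ∪ B) ∪ (p.support.toFinset \ {u, v})).card :=
            Finset.card_le_card hsub
          _ ≤ (A ∪ B).card + (p.support.toFinset \ {u, v}).card := Finset.card_union_le _ _
          _ ≤ (A.card + B.card) + 2 := by
            have := Finset.card_union_le A B
            omega
      -- build new collection
      set Q : Finset (Finset V) := (P.erase A).erase B with hQ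
      set P' : Finset (Finset V) := insert M Q with hP'
      have hBQ : B ∈ P.erase A := Finset.mem_erase.mpr ⟨fun h => hABne h.symm, hB⟩
      have hQcard : Q.card + 2 = P.card := by
        rw [hQ, Finset.card_erase_of_mem hBQ, Finset.card_erase_of_mem hA]
        omega
      have hP'card : P'.card ≤ P.card - 1 := by
        have h := Finset.card_insert_le M Q
        rw [← hP'] at h
        omega
      -- sup grows
      have hsup : P.sup id ⊆ P'.sup id := by
        intro x hx
        rw [Finset.mem_sup] at hx ⊢
        obtain ⟨C, hC, hxC⟩ := hx
        by_cases hCA : C = A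
        · exact ⟨M, Finset.mem_insert_self _ _, by subst hCA; simp [hM]; tauto⟩
        · by_cases hCB : C = B
          · exact ⟨M, Finset.mem_insert_self _ _, by subst hCB; simp [hM]; tauto⟩
          · exact ⟨C, Finset.mem_insert_of_mem (Finset.mem_erase.mpr ⟨hCB,
              Finset.mem_erase.mpr ⟨hCA, hC⟩⟩), hxC⟩
      -- sums
      have hsumQ : (∑ X ∈ Q, X.card) + B.card + A.card = ∑ X ∈ P, X.card := by
        rw [hQ, Finset.sum_erase_add _ _ hBQ, Finset.sum_erase_add _ _ hA]
      have hsumP' : (∑ X ∈ P', X.card) ≤ M.card + ∑ X ∈ Q, X.card := by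
        by_cases hMQ : M ∈ Q
        · rw [hP', Finset.insert_eq_self.mpr hMQ]
          omega
        · rw [hP', Finset.sum_insert hMQ]
      -- apply IH
      have hP'ne : P'.Nonempty := ⟨M, Finset.mem_insert_self _ _⟩
      have hP'conn : ∀ X ∈ P', (G.induce (X : Set V)).Connected := by
        intro X hX
        rcases Finset.mem_insert.mp hX with rfl | hX
        · exact hMconn
        · exact hPconn X (Finset.mem_of_mem_erase (Finset.mem_of_mem_erase hX))
      have hP'dom : ∀ w : V, w ∈ P'.sup id ∨ ∃ x ∈ P'.sup id, G.Adj x w := by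
        intro w
        rcases hPdom w with hw | ⟨x, hx, hadj⟩
        · exact Or.inl (hsup hw)
        · exact Or.inr ⟨x, hsup hx, hadj⟩
      obtain ⟨S', hS'sup, hS'conn, hS'card⟩ := ih P' (by omega) hP'ne hP'conn hP'dom
      refine ⟨S', fun x hx => hS'sup (hsup hx), hS'conn, ?_⟩
      omega

/-- For a finite connected graph `G` and a nonempty dominating
set `S`, there exists a connected dominating set `S' ⊇ S` with
`|S'| ≤ 3|S| - 2`. -/
theorem stmt4 {V : Type*} [Fintype V] [DecidableEq V] (G : SimpleGraph V)
    (hconn : G.Connected) (S : Finset V) (hS : S.Nonempty)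
    (hdom : ∀ v : V, v ∈ S ∨ ∃ u ∈ S, G.Adj u v) :
    ∃ S' : Finset V, S ⊆ S' ∧
      (∀ v : V, v ∈ S' ∨ ∃ u ∈ S', G.Adj u v) ∧
      (SimpleGraph.induce (↑S' : Set V) G).Connected ∧
      S'.card ≤ 3 * S.card - 2 := by
  classical
  set P : Finset (Finset V) := S.image (fun a => {a}) with hP
  have hPsub : S ⊆ P.sup id := by
    intro x hx
    rw [Finset.mem_sup]
    exact ⟨{x}, Finset.mem_image_of_mem _ hx, Finset.mem_singleton_self x⟩
  have hPcard : P.card = S.card :=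
    Finset.card_image_of_injective _ Finset.singleton_injective
  have hPsum : (∑ A ∈ P, A.card) = S.card := by
    rw [hP, Finset.sum_image (fun x _ y _ h => Finset.singleton_injective h)]
    simp
  have hPconn : ∀ A ∈ P, (G.induce (A : Set V)).Connected := by
    intro A hA
    obtain ⟨a, _, rfl⟩ := Finset.mem_image.mp hA
    rw [Finset.coe_singleton]
    exact induce_singleton_connected G a
  have hPdom : ∀ v : V, v ∈ P.sup id ∨ ∃ u ∈ P.sup id, G.Adj u v := by
    intro v
    rcases hdom v with hv | ⟨u, hu, hadj⟩
    · exact Or.inl (hPsub hv)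
    · exact Or.inr ⟨u, hPsub hu, hadj⟩
  obtain ⟨S', hS'sup, hS'conn, hS'card⟩ :=
    stmt4_aux G hconn P.card P le_rfl (hS.image _) hPconn hPdom
  have hSS' : S ⊆ S' := fun x hx => hS'sup (hPsub hx)
  refine ⟨S', hSS', ?_, hS'conn, ?_⟩
  · intro v
    rcases hdom v with hv | ⟨u, hu, hadj⟩
    · exact Or.inl (hSS' hv)
    · exact Or.inr ⟨u, hSS' hu, hadj⟩
  · have h1 : 1 ≤ S.card := Finset.card_pos.mpr hS
    omega
end

section
/- Let G = (V,E) be a finite graph and S ⊆ V a dominating set. If u, v ∈ S and there is a path of length d between u and v in G, then there is a path of length at most d between u and v in the graph G_S (on vertex set S, edges between vertices at G-distance at most 3). -/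
lemma stmt12_aux {V : Type*} (G : SimpleGraph V) (S : Set V)
    (hdom : ∀ v : V, v ∈ S ∨ ∃ u ∈ S, G.Adj u v)
    :
    ∀ {x v : V} (w : G.Walk x v) (hv : v ∈ S) (s : V) (hs : s ∈ S),
      (s = x ∨ (G.Adj s x ∧ x ∉ S)) →
      ∃ q : (domGraph G S).Walk ⟨s, hs⟩ ⟨v, hv⟩, q.length ≤ w.length := by
  intro x v w
  induction w with
  | nil =>
    intro hv s hs h
    rcases h with h | ⟨_, hvS⟩
    · subst h; exact ⟨SimpleGraph.Walk.nil, le_refl _⟩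
    · exact absurd hv hvS
  | cons hadj w' ih =>
    rename_i x y vv
    intro hv s hs h
    -- choose dominator t of y
    obtain ⟨t, ht, hty⟩ : ∃ t, t ∈ S ∧ (t = y ∨ (G.Adj t y ∧ y ∉ S)) := by
      by_cases hy : y ∈ S
      · exact ⟨y, hy, Or.inl rfl⟩
      · rcases hdom y with h' | ⟨t, htS, hta⟩
        · exact absurd h' hy
        · exact ⟨t, htS, Or.inr ⟨hta, hy⟩⟩
    obtain ⟨q, hq⟩ := ih hv t ht hty
    by_cases hst : s = t
    · subst hst
      exact ⟨q, by simpa using Nat.le_succ_of_le hq⟩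
    · -- build a walk from s to t of length ≤ 3
      have hp : ∃ p : G.Walk s t, p.length ≤ 3 := by
        rcases h with rfl | ⟨hsx, _⟩
        · rcases hty with rfl | ⟨hty, _⟩
          · exact ⟨hadj.toWalk, by simp⟩
          · exact ⟨SimpleGraph.Walk.cons hadj hty.symm.toWalk, by simp⟩
        · rcases hty with rfl | ⟨hty, _⟩
          · exact ⟨SimpleGraph.Walk.cons hsx hadj.toWalk, by simp⟩
          · exact ⟨SimpleGraph.Walk.cons hsx (SimpleGraph.Walk.cons hadj hty.symm.toWalk), by simp⟩
      obtain ⟨p, hp3⟩ := hp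
      have hr : G.Reachable s t := ⟨p⟩
      have hd : G.dist s t ≤ 3 := le_trans (SimpleGraph.dist_le p) hp3
      have hadj' : (domGraph G S).Adj ⟨s, hs⟩ ⟨t, ht⟩ :=
        ⟨fun hEq => hst (congrArg Subtype.val hEq), hr, hd⟩
      exact ⟨SimpleGraph.Walk.cons hadj' q, by simpa using Nat.succ_le_succ hq⟩

/-- If `u, v ∈ S` for a dominating set `S` of a finite graph `G`
and there is a walk of length `d` between `u` and `v` in `G`, then there is a
walk of length at most `d` between them in `G_S`. -/
theorem stmt12 {V : Type*} [Fintype V] (G : SimpleGraph V) (S : Set V)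
    (hdom : ∀ v : V, v ∈ S ∨ ∃ u ∈ S, G.Adj u v)
    (u v : V) (hu : u ∈ S) (hv : v ∈ S)
    (d : ℕ) (w : G.Walk u v) (hw : w.length = d) :
    ∃ q : (domGraph G S).Walk ⟨u, hu⟩ ⟨v, hv⟩, q.length ≤ d := by
  subst hw
  exact stmt12_aux G S hdom w hv u hu (Or.inl rfl)
end

section
/- Let Ω be a finite probability space, Z = ∑_{v∈V} Z_v a sum of nonnegative random variables over a finite index set V, and B a Bernoulli random variable such that Z_v is independent of B for all v outside a subset N ⊆ V. Suppose b ∈ {0,1} is chosen to minimize ∑_{v∈N} α̃_{v,b} where α̃_{v,b} ≥ E[Z_v | B = b] ≥ α̃_{v,b} − δ for some δ ≥ 0. Then E[Z | B = b] ≤ E[Z] + 2|N|δ. -/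
open MeasureTheory ProbabilityTheory

/-- Derandomization step via conditional expectations with
rounded estimates. `Z = ∑ v, Z v` is a sum of nonnegative random variables,
`B` a Bernoulli random variable, and for `v ∉ N` the variable `Z v` is
independent of `B` (i.e. `E[Z_v | B = j] = E[Z_v]`). If `α̃ v j` approximates
`E[Z_v | B = j]` up to additive error `δ` from above, and `b ∈ {0,1}`
minimizes `∑_{v ∈ N} α̃ v b`, then `E[Z | B = b] ≤ E[Z] + 2|N|δ`. -/
theorem stmt15 {V Ω : Type*} [Fintype V] [Fintype Ω] [MeasurableSpace Ω]
    [MeasurableSingletonClass Ω]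
    (μ : Measure Ω) [IsProbabilityMeasure μ]
    (Z : V → Ω → ℝ) (hZ0 : ∀ v ω, 0 ≤ Z v ω)
    (B : Ω → ℝ) (hB01 : ∀ ω, B ω = 0 ∨ B ω = 1)
    (hpos : ∀ j ∈ ({0, 1} : Set ℝ), 0 < μ {ω | B ω = j})
    (N : Finset V)
    (hindep : ∀ v ∉ N, ∀ j ∈ ({0, 1} : Set ℝ),
      ∫ ω, Z v ω ∂(μ[|{ω | B ω = j}]) = ∫ ω, Z v ω ∂μ)
    (δ : ℝ) (hδ : 0 ≤ δ) (αt : V → ℝ → ℝ)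
    (hα : ∀ v ∈ N, ∀ j ∈ ({0, 1} : Set ℝ),
      ∫ ω, Z v ω ∂(μ[|{ω | B ω = j}]) ≤ αt v j ∧
        αt v j - δ ≤ ∫ ω, Z v ω ∂(μ[|{ω | B ω = j}]))
    (b : ℝ) (hb : b ∈ ({0, 1} : Set ℝ))
    (hbmin : ∀ j ∈ ({0, 1} : Set ℝ), ∑ v ∈ N, αt v b ≤ ∑ v ∈ N, αt v j) :
    ∫ ω, ∑ v, Z v ω ∂(μ[|{ω | B ω = b}])
      ≤ (∫ ω, ∑ v, Z v ω ∂μ) + 2 * N.card * δ := by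
  classical
  set s : ℝ → Set Ω := fun j => {ω | B ω = j} with hs
  have h0 : (0 : ℝ) ∈ ({0, 1} : Set ℝ) := by simp
  have h1 : (1 : ℝ) ∈ ({0, 1} : Set ℝ) := by simp
  have hsc : (s 0)ᶜ = s 1 := by
    ext ω
    simp only [hs, Set.mem_compl_iff, Set.mem_setOf_eq]
    rcases hB01 ω with h | h <;> simp [h]
  have hmeas : ∀ j, MeasurableSet (s j) := fun j => (Set.toFinite _).measurableSet
  have hne : ∀ j ∈ ({0, 1} : Set ℝ), μ (s j) ≠ 0 := fun j hj => (hpos j hj).ne'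
  have htop : ∀ j, μ (s j) ≠ ⊤ := fun j => (measure_lt_top μ _).ne
  haveI hP : ∀ j ∈ ({0, 1} : Set ℝ), IsProbabilityMeasure (μ[|s j]) :=
    fun j hj => cond_isProbabilityMeasure (hne j hj)
  set p : ℝ → ℝ := fun j => (μ (s j)).toReal with hp
  have hpnn : ∀ j, 0 ≤ p j := fun j => ENNReal.toReal_nonneg
  have hpne : ∀ j ∈ ({0, 1} : Set ℝ), p j ≠ 0 := fun j hj =>
    ENNReal.toReal_ne_zero.2 ⟨hne j hj, htop j⟩
  have hpsum : p 0 + p 1 = 1 := by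
    have h := measure_add_measure_compl (μ := μ) (hmeas 0)
    rw [hsc] at h
    have h' := congrArg ENNReal.toReal h
    rw [ENNReal.toReal_add (htop 0) (htop 1)] at h'
    simpa using h'
  -- conditional expectation formulas
  have hrest : ∀ (f : Ω → ℝ), ∀ j ∈ ({0, 1} : Set ℝ),
      ∫ ω in s j, f ω ∂μ = p j * ∫ ω, f ω ∂(μ[|s j]) := by
    intro f j hj
    rw [ProbabilityTheory.cond, integral_smul_measure, ENNReal.toReal_inv, smul_eq_mul,
      ← mul_assoc, mul_inv_cancel₀ (hpne j hj), one_mul]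
  have hdecomp : ∀ (f : Ω → ℝ),
      ∫ ω, f ω ∂μ = p 0 * ∫ ω, f ω ∂(μ[|s 0]) + p 1 * ∫ ω, f ω ∂(μ[|s 1]) := by
    intro f
    rw [← hrest f 0 h0, ← hrest f 1 h1, ← hsc, integral_add_compl (hmeas 0) .of_finite]
  -- abbreviations
  set E : V → ℝ → ℝ := fun v j => ∫ ω, Z v ω ∂(μ[|s j]) with hE
  set A : V → ℝ := fun v => ∫ ω, Z v ω ∂μ with hA
  have hAv : ∀ v, A v = p 0 * E v 0 + p 1 * E v 1 := fun v => hdecomp (Z v)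
  -- step 2 : key bound on N-sums
  have hstep2 : ∀ j ∈ ({0, 1} : Set ℝ),
      ∑ v ∈ N, E v b ≤ ∑ v ∈ N, E v j + N.card * δ := by
    intro j hj
    calc ∑ v ∈ N, E v b ≤ ∑ v ∈ N, αt v b :=
          Finset.sum_le_sum fun v hv => (hα v hv b hb).1
      _ ≤ ∑ v ∈ N, αt v j := hbmin j hj
      _ ≤ ∑ v ∈ N, (E v j + δ) :=
          Finset.sum_le_sum fun v hv => by linarith [(hα v hv j hj).2]
      _ = ∑ v ∈ N, E v j + N.card * δ := by
          rw [Finset.sum_add_distrib, Finset.sum_const, nsmul_eq_mul]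
  have hkey : ∑ v ∈ N, E v b ≤ ∑ v ∈ N, A v + N.card * δ := by
    have h2 := hstep2 0 h0
    have h3 := hstep2 1 h1
    have := add_le_add (mul_le_mul_of_nonneg_left h2 (hpnn 0))
      (mul_le_mul_of_nonneg_left h3 (hpnn 1))
    have hsumA : ∑ v ∈ N, A v = p 0 * ∑ v ∈ N, E v 0 + p 1 * ∑ v ∈ N, E v 1 := by
      simp only [hAv, Finset.sum_add_distrib, Finset.mul_sum]
    have heq : p 0 * (∑ v ∈ N, E v 0 + ↑N.card * δ) + p 1 * (∑ v ∈ N, E v 1 + ↑N.card * δ)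
        = ∑ v ∈ N, A v + N.card * δ := by
      rw [hsumA]; linear_combination (↑N.card * δ) * hpsum
    have hl : ∑ v ∈ N, E v b = p 0 * ∑ v ∈ N, E v b + p 1 * ∑ v ∈ N, E v b := by
      rw [← add_mul, hpsum, one_mul]
    linarith [this, heq, hl]
  -- assemble
  haveI := hP b hb
  have hswap1 : ∫ ω, ∑ v, Z v ω ∂(μ[|s b]) = ∑ v, E v b :=
    integral_finset_sum _ fun v _ => .of_finite
  have hswap2 : ∫ ω, ∑ v, Z v ω ∂μ = ∑ v, A v :=
    integral_finset_sum _ fun v _ => .of_finite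
  rw [hswap1, hswap2]
  have hsplit1 : ∑ v, E v b = ∑ v ∈ N, E v b + ∑ v ∈ Nᶜ, E v b :=
    (Finset.sum_add_sum_compl N _).symm
  have hsplit2 : ∑ v, A v = ∑ v ∈ N, A v + ∑ v ∈ Nᶜ, A v :=
    (Finset.sum_add_sum_compl N _).symm
  have houtside : ∑ v ∈ Nᶜ, E v b = ∑ v ∈ Nᶜ, A v :=
    Finset.sum_congr rfl fun v hv => hindep v (Finset.mem_compl.1 hv) b hb
  have hNδ : (0:ℝ) ≤ N.card * δ := by positivity
  rw [hsplit1, hsplit2, houtside]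
  have : (2 : ℝ) * N.card * δ = N.card * δ + N.card * δ := by ring
  linarith [hkey]
end
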